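/- Let ε, α₀, β₀ ∈ ℂ* and set α(l) = ε^l·α₀, β(m) = ε^m·β₀ (Lemma A₆ setting). Suppose F, G : ℤ × ℤ → ℂ* satisfy the l-direction q-Painlevé II system F(l+1,m)·F(l,m) = (G(l+1,m)+1)/(α(l+1)²·G(l+1,m)) and G(l+1,m)·G(l,m) = β(m)²·(F(l,m)+1)/(α(l+1)²·F(l,m)), and additionally H defined by H(l,m) = 1/(F(l,m)·G(l,m)) satisfies the m-direction system G(l,m+1)·G(l,m) = β(m)²·(H(l,m+1)+α(l)²)/(H(l,m+1)·(β(m)²·H(l,m+1)+α(l)²)) and H(l,m+1)·H(l,m) = α(l)²/(G(l,m)·(G(l,m)+1)). Then for all l,m, the values F(l,m) and G(l,m) are uniquely determined by F(0,0), G(0,0), α₀, β₀, ε; in particular, computing F(l,m) by first iterating in the l-direction and then the m-direction gives the same result as first iterating in the m-direction and then the l-direction. -/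

import Mathlib

theorem stmt_8 (ε α₀ β₀ : ℂ) (hε : ε ≠ 0) (hα₀ : α₀ ≠ 0) (hβ₀ : β₀ ≠ 0)
    (α β : ℤ → ℂ) (hα : ∀ l : ℤ, α l = ε ^ l * α₀) (hβ : ∀ m : ℤ, β m = ε ^ m * β₀)
    (F G F' G' : ℤ × ℤ → ℂ)
    (hF : ∀ l m : ℤ, F (l, m) ≠ 0) (hG : ∀ l m : ℤ, G (l, m) ≠ 0)
    (hF' : ∀ l m : ℤ, F' (l, m) ≠ 0) (hG' : ∀ l m : ℤ, G' (l, m) ≠ 0)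
    (hden1 : ∀ l m : ℤ, G (l, m) + 1 ≠ 0) (hden1' : ∀ l m : ℤ, G' (l, m) + 1 ≠ 0)
    (hden2 : ∀ l m : ℤ,
      (β m) ^ 2 * (1 / (F (l, m) * G (l, m))) + (α l) ^ 2 ≠ 0)
    (hden2' : ∀ l m : ℤ,
      (β m) ^ 2 * (1 / (F' (l, m) * G' (l, m))) + (α l) ^ 2 ≠ 0)
    (hl1 : ∀ l m : ℤ,
      F (l + 1, m) * F (l, m) = (G (l + 1, m) + 1) / ((α (l + 1)) ^ 2 * G (l + 1, m)))
    (hl2 : ∀ l m : ℤ,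
      G (l + 1, m) * G (l, m) = (β m) ^ 2 * (F (l, m) + 1) / ((α (l + 1)) ^ 2 * F (l, m)))
    (hm1 : ∀ l m : ℤ,
      G (l, m + 1) * G (l, m)
        = (β m) ^ 2 * (1 / (F (l, m + 1) * G (l, m + 1)) + (α l) ^ 2)
          / ((1 / (F (l, m + 1) * G (l, m + 1)))
              * ((β m) ^ 2 * (1 / (F (l, m + 1) * G (l, m + 1))) + (α l) ^ 2)))
    (hm2 : ∀ l m : ℤ,
      (1 / (F (l, m + 1) * G (l, m + 1))) * (1 / (F (l, m) * G (l, m)))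
        = (α l) ^ 2 / (G (l, m) * (G (l, m) + 1)))
    (hl1' : ∀ l m : ℤ,
      F' (l + 1, m) * F' (l, m) = (G' (l + 1, m) + 1) / ((α (l + 1)) ^ 2 * G' (l + 1, m)))
    (hl2' : ∀ l m : ℤ,
      G' (l + 1, m) * G' (l, m) = (β m) ^ 2 * (F' (l, m) + 1) / ((α (l + 1)) ^ 2 * F' (l, m)))
    (hm1' : ∀ l m : ℤ,
      G' (l, m + 1) * G' (l, m)
        = (β m) ^ 2 * (1 / (F' (l, m + 1) * G' (l, m + 1)) + (α l) ^ 2)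
          / ((1 / (F' (l, m + 1) * G' (l, m + 1)))
              * ((β m) ^ 2 * (1 / (F' (l, m + 1) * G' (l, m + 1))) + (α l) ^ 2)))
    (hm2' : ∀ l m : ℤ,
      (1 / (F' (l, m + 1) * G' (l, m + 1))) * (1 / (F' (l, m) * G' (l, m)))
        = (α l) ^ 2 / (G' (l, m) * (G' (l, m) + 1)))
    (hF0 : F (0, 0) = F' (0, 0)) (hG0 : G (0, 0) = G' (0, 0)) :
    ∀ l m : ℤ, F (l, m) = F' (l, m) ∧ G (l, m) = G' (l, m) := by
  -- forward step in l
  have stepL : ∀ l m : ℤ, F (l, m) = F' (l, m) → G (l, m) = G' (l, m) →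
      F (l + 1, m) = F' (l + 1, m) ∧ G (l + 1, m) = G' (l + 1, m) := by
    intro l m hf hg
    have e1 : G (l + 1, m) * G (l, m) = G' (l + 1, m) * G' (l, m) := by
      rw [hl2, hl2', hf]
    rw [hg] at e1
    have hGn : G (l + 1, m) = G' (l + 1, m) := mul_right_cancel₀ (hG' l m) e1
    have e2 : F (l + 1, m) * F (l, m) = F' (l + 1, m) * F' (l, m) := by
      rw [hl1, hl1', hGn]
    rw [hf] at e2
    exact ⟨mul_right_cancel₀ (hF' l m) e2, hGn⟩
  -- backward step in l
  have stepLb : ∀ l m : ℤ, F (l + 1, m) = F' (l + 1, m) → G (l + 1, m) = G' (l + 1, m) →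
      F (l, m) = F' (l, m) ∧ G (l, m) = G' (l, m) := by
    intro l m hf hg
    have e1 : F (l + 1, m) * F (l, m) = F' (l + 1, m) * F' (l, m) := by
      rw [hl1, hl1', hg]
    rw [hf] at e1
    have hFn : F (l, m) = F' (l, m) := mul_left_cancel₀ (hF' (l + 1) m) e1
    have e2 : G (l + 1, m) * G (l, m) = G' (l + 1, m) * G' (l, m) := by
      rw [hl2, hl2', hFn]
    rw [hg] at e2
    exact ⟨hFn, mul_left_cancel₀ (hG' (l + 1) m) e2⟩
  -- forward step in m
  have stepM : ∀ l m : ℤ, F (l, m) = F' (l, m) → G (l, m) = G' (l, m) →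
      F (l, m + 1) = F' (l, m + 1) ∧ G (l, m + 1) = G' (l, m + 1) := by
    intro l m hf hg
    have e1 : (1 / (F (l, m + 1) * G (l, m + 1))) * (1 / (F (l, m) * G (l, m)))
        = (1 / (F' (l, m + 1) * G' (l, m + 1))) * (1 / (F' (l, m) * G' (l, m))) := by
      rw [hm2, hm2', hg]
    rw [hf, hg] at e1
    have hH : 1 / (F (l, m + 1) * G (l, m + 1)) = 1 / (F' (l, m + 1) * G' (l, m + 1)) :=
      mul_right_cancel₀ (one_div_ne_zero (mul_ne_zero (hF' l m) (hG' l m))) e1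
    have e2 : G (l, m + 1) * G (l, m) = G' (l, m + 1) * G' (l, m) := by
      rw [hm1, hm1', hH]
    rw [hg] at e2
    have hGn : G (l, m + 1) = G' (l, m + 1) := mul_right_cancel₀ (hG' l m) e2
    rw [one_div, one_div] at hH
    have e3 := inv_injective hH
    rw [hGn] at e3
    exact ⟨mul_right_cancel₀ (hG' l (m + 1)) e3, hGn⟩
  -- backward step in m
  have stepMb : ∀ l m : ℤ, F (l, m + 1) = F' (l, m + 1) → G (l, m + 1) = G' (l, m + 1) →
      F (l, m) = F' (l, m) ∧ G (l, m) = G' (l, m) := by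
    intro l m hf hg
    have hH : 1 / (F (l, m + 1) * G (l, m + 1)) = 1 / (F' (l, m + 1) * G' (l, m + 1)) := by
      rw [hf, hg]
    have e2 : G (l, m + 1) * G (l, m) = G' (l, m + 1) * G' (l, m) := by
      rw [hm1, hm1', hH]
    rw [hg] at e2
    have hGn : G (l, m) = G' (l, m) := mul_left_cancel₀ (hG' l (m + 1)) e2
    have e1 : (1 / (F (l, m + 1) * G (l, m + 1))) * (1 / (F (l, m) * G (l, m)))
        = (1 / (F' (l, m + 1) * G' (l, m + 1))) * (1 / (F' (l, m) * G' (l, m))) := by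
      rw [hm2, hm2', hGn]
    rw [hH] at e1
    have hHn : 1 / (F (l, m) * G (l, m)) = 1 / (F' (l, m) * G' (l, m)) :=
      mul_left_cancel₀ (one_div_ne_zero (mul_ne_zero (hF' l (m + 1)) (hG' l (m + 1)))) e1
    rw [one_div, one_div] at hHn
    have e3 := inv_injective hHn
    rw [hGn] at e3
    exact ⟨mul_right_cancel₀ (hG' l m) e3, hGn⟩
  -- column l = 0
  have col : ∀ m : ℤ, F (0, m) = F' (0, m) ∧ G (0, m) = G' (0, m) := by
    intro m
    induction m using Int.induction_on with
    | zero => exact ⟨hF0, hG0⟩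
    | succ k ih => exact stepM 0 k ih.1 ih.2
    | pred k ih =>
      have e : (-(k : ℤ) - 1) + 1 = -(k : ℤ) := by ring
      exact stepMb 0 (-(k : ℤ) - 1) (by rw [e]; exact ih.1) (by rw [e]; exact ih.2)
  intro l m
  induction l using Int.induction_on with
  | zero => exact col m
  | succ k ih => exact stepL k m ih.1 ih.2
  | pred k ih =>
    have e : (-(k : ℤ) - 1) + 1 = -(k : ℤ) := by ring
    exact stepLb (-(k : ℤ) - 1) m (by rw [e]; exact ih.1) (by rw [e]; exact ih.2)
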